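/- Let a₁, a₂, …, a_k be positive integers with gcd(a₁,…,a_k) = 1 and with a₁ odd. Then the alternating Sylvester sum satisfies ∑_{n ∈ NR} (−1)ⁿ n = −(1/2) ∑_{i=1}^{a₁−1} (−1)^{m_i} m_i + (a₁/4) ∑_{i=1}^{a₁−1} (−1)^{m_i} + (a₁ − 1)/4. -/

import Mathlib

private lemma sum_neg_one_pow (q : ℕ) :
    ∑ t ∈ Finset.range q, (-1:ℚ)^t = (1 - (-1)^q)/2 := by
  induction q with
  | zero => simp
  | succ n ih => rw [Finset.sum_range_succ, ih, pow_succ]; ring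

private lemma sum_neg_one_pow_mul (q : ℕ) :
    ∑ t ∈ Finset.range q, (-1:ℚ)^t * t = ((-1)^q * (1 - 2*q) - 1)/4 := by
  induction q with
  | zero => simp
  | succ n ih => rw [Finset.sum_range_succ, ih, pow_succ]; push_cast; ring

private lemma sum_alt_Ico (b : ℕ) :
    ∑ i ∈ Finset.Ico 1 (2*b+1), (-1:ℚ)^i = 0 := by
  induction b with
  | zero => simp
  | succ n ih =>
    have h1 : 2*(n+1)+1 = (2*n+1) + 1 + 1 := by ring
    rw [h1, Finset.sum_Ico_succ_top (by omega), Finset.sum_Ico_succ_top (by omega), ih]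
    have he : Even (2*n+1+1) := ⟨n+1, by ring⟩
    have ho : Odd (2*n+1) := ⟨n, by ring⟩
    rw [he.neg_one_pow, ho.neg_one_pow]; ring

private lemma sum_alt_Ico_mul (b : ℕ) :
    ∑ i ∈ Finset.Ico 1 (2*b+1), (-1:ℚ)^i * i = b := by
  induction b with
  | zero => simp
  | succ n ih =>
    have h1 : 2*(n+1)+1 = (2*n+1) + 1 + 1 := by ring
    rw [h1, Finset.sum_Ico_succ_top (by omega), Finset.sum_Ico_succ_top (by omega), ih]
    have he : Even (2*n+1+1) := ⟨n+1, by ring⟩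
    have ho : Odd (2*n+1) := ⟨n, by ring⟩
    rw [he.neg_one_pow, ho.neg_one_pow]; push_cast; ring

/-- the alternating Sylvester sum `∑_{n ∈ NR} (-1)ⁿ n` when `a₁` is odd. -/
theorem alternating_sylvester_sum
    (k : ℕ) (hk : 0 < k) (a : Fin k → ℕ) (ha : ∀ i, 0 < a i)
    (hgcd : Finset.univ.gcd a = 1) (hodd : Odd (a ⟨0, hk⟩))
    (m : ℕ → ℕ)
    (hm : ∀ i, 1 ≤ i → i < a ⟨0, hk⟩ →
      0 < m i ∧ (∃ x : Fin k → ℕ, m i = ∑ j, x j * a j) ∧ m i % a ⟨0, hk⟩ = i ∧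
        ∀ n : ℕ, 0 < n → (∃ x : Fin k → ℕ, n = ∑ j, x j * a j) → n % a ⟨0, hk⟩ = i →
          m i ≤ n) :
    ∑ᶠ n ∈ {n : ℕ | 0 < n ∧ ¬∃ x : Fin k → ℕ, n = ∑ j, x j * a j},
        (-1 : ℚ) ^ n * (n : ℚ) =
      -(1 / 2) * ∑ i ∈ Finset.Ico 1 (a ⟨0, hk⟩), (-1 : ℚ) ^ m i * (m i : ℚ)
        + ((a ⟨0, hk⟩ : ℚ) / 4) * ∑ i ∈ Finset.Ico 1 (a ⟨0, hk⟩), (-1 : ℚ) ^ m i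
        + ((a ⟨0, hk⟩ : ℚ) - 1) / 4 := by
  set A := a ⟨0, hk⟩ with hA
  have hA0 : 0 < A := ha _
  -- representability is closed under addition and contains multiples of A
  have repMul : ∀ t : ℕ, ∃ x : Fin k → ℕ, t * A = ∑ j, x j * a j := by
    intro t
    refine ⟨fun j => if j = ⟨0, hk⟩ then t else 0, ?_⟩
    simp [ite_mul, Finset.sum_ite_eq', hA]
  have repAdd : ∀ u v : ℕ, (∃ x : Fin k → ℕ, u = ∑ j, x j * a j) →
      (∃ x : Fin k → ℕ, v = ∑ j, x j * a j) →
      (∃ x : Fin k → ℕ, u + v = ∑ j, x j * a j) := by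
    rintro u v ⟨x, hx⟩ ⟨y, hy⟩
    exact ⟨x + y, by simp [hx, hy, add_mul, Finset.sum_add_distrib]⟩
  -- the bound
  set S := (∑ i ∈ Finset.Ico 1 A, m i) with hS
  have hmS : ∀ i ∈ Finset.Ico 1 A, m i ≤ S :=
    fun i hi => Finset.single_le_sum (fun _ _ => Nat.zero_le _) hi
  set F := (Finset.range S).filter (fun n => n % A ≠ 0 ∧ n < m (n % A)) with hF
  have hset : {n : ℕ | 0 < n ∧ ¬∃ x : Fin k → ℕ, n = ∑ j, x j * a j} = ↑F := by
    ext n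
    simp only [Set.mem_setOf_eq, hF, Finset.coe_filter, Finset.mem_range, Set.mem_setOf_eq,
      Finset.mem_coe, Finset.mem_filter]
    constructor
    · rintro ⟨hn, hnr⟩
      have hmod : n % A ≠ 0 := by
        intro h
        obtain ⟨c, rfl⟩ := Nat.dvd_of_mod_eq_zero h
        exact hnr (by simpa [mul_comm] using repMul c)
      have hi1 : 1 ≤ n % A := Nat.one_le_iff_ne_zero.mpr hmod
      have hi2 : n % A < A := Nat.mod_lt _ hA0
      obtain ⟨-, hrep, hmi, hmin⟩ := hm (n % A) hi1 hi2
      have hlt : n < m (n % A) := by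
        by_contra hge
        push_neg at hge
        have hdvd : A ∣ n - m (n % A) := (Nat.modEq_iff_dvd' hge).mp hmi
        obtain ⟨c, hc⟩ := hdvd
        have hn' : n = m (n % A) + A * c := by omega
        have hrc : ∃ x : Fin k → ℕ, A * c = ∑ j, x j * a j := by
          rw [mul_comm]; exact repMul c
        exact hnr (hn' ▸ repAdd _ _ hrep hrc)
      exact ⟨lt_of_lt_of_le hlt (hmS _ (Finset.mem_Ico.mpr ⟨hi1, hi2⟩)), hmod, hlt⟩
    · rintro ⟨-, hmod, hlt⟩
      have hn : 0 < n := Nat.pos_of_ne_zero (fun h => hmod (by simp [h]))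
      have hi1 : 1 ≤ n % A := Nat.one_le_iff_ne_zero.mpr hmod
      have hi2 : n % A < A := Nat.mod_lt _ hA0
      obtain ⟨-, -, -, hmin⟩ := hm (n % A) hi1 hi2
      exact ⟨hn, fun hrep => absurd (hmin n hn hrep rfl) (not_le.mpr hlt)⟩
  rw [hset, finsum_mem_coe_finset]
  have hmaps : ∀ n ∈ F, n % A ∈ Finset.Ico 1 A := by
    intro n hn
    simp only [hF, Finset.mem_filter] at hn
    exact Finset.mem_Ico.mpr ⟨Nat.one_le_iff_ne_zero.mpr hn.2.1, Nat.mod_lt _ hA0⟩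
  rw [← Finset.sum_fiberwise_of_maps_to hmaps (fun n => (-1:ℚ)^n * n)]
  -- per-residue computation
  have key : ∀ i ∈ Finset.Ico 1 A,
      ∑ n ∈ F.filter (fun n => n % A = i), (-1:ℚ)^n * n =
        -(1/2) * ((-1:ℚ)^(m i) * (m i : ℚ)) + ((A:ℚ)/4) * (-1:ℚ)^(m i)
          + ((1/2) * ((-1:ℚ)^i * i) - ((A:ℚ)/4) * (-1:ℚ)^i) := by
    intro i hi
    obtain ⟨hi1, hi2⟩ := Finset.mem_Ico.mp hi
    obtain ⟨-, -, hmi, -⟩ := hm i hi1 hi2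
    obtain ⟨q, hmiq⟩ : ∃ q, m i = i + A * q := by
      refine ⟨m i / A, ?_⟩
      have := Nat.div_add_mod (m i) A
      omega
    have hfib : F.filter (fun n => n % A = i) = (Finset.range q).image (fun t => i + t * A) := by
      ext n
      simp only [hF, Finset.mem_filter, Finset.mem_range, Finset.mem_image]
      constructor
      · rintro ⟨⟨-, -, hlt⟩, hni⟩
        rw [hni] at hlt
        have h1 : A * (n / A) + n % A = n := Nat.div_add_mod n A
        refine ⟨n / A, ?_, ?_⟩
        · have h2 : A * (n / A) < A * q := by omega
          exact Nat.lt_of_mul_lt_mul_left h2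
        · rw [mul_comm]; omega
      · rintro ⟨t, ht, rfl⟩
        have hni : (i + t * A) % A = i := by
          rw [Nat.add_mul_mod_self_right, Nat.mod_eq_of_lt hi2]
        have hlt : i + t * A < m i := by
          have h2 : A * t < A * q := (Nat.mul_lt_mul_left hA0).mpr ht
          rw [hmiq, mul_comm t A]
          omega
        refine ⟨⟨lt_of_lt_of_le hlt (hmS i hi), ?_, ?_⟩, hni⟩
        · rw [hni]; omega
        · rw [hni]; exact hlt
    have hinj : Set.InjOn (fun t => i + t * A) (Finset.range q) := by
      intro t1 _ t2 _ h
      simp only at h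
      have : t1 * A = t2 * A := by omega
      exact Nat.eq_of_mul_eq_mul_right hA0 this
    rw [hfib, Finset.sum_image (fun x hx y hy h => hinj hx hy h)]
    have hpm : (-1:ℚ)^(m i) = (-1)^i * (-1)^q := by
      rw [hmiq, pow_add, pow_mul, hodd.neg_one_pow]
    calc ∑ t ∈ Finset.range q, (-1:ℚ)^(i + t*A) * ((i + t*A : ℕ) : ℚ)
        = ∑ t ∈ Finset.range q,
            ((-1:ℚ)^i * (i:ℚ) * (-1:ℚ)^t + ((-1:ℚ)^i * (A:ℚ)) * ((-1:ℚ)^t * t)) := by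
          refine Finset.sum_congr rfl fun t _ => ?_
          rw [pow_add, mul_comm t A, pow_mul, hodd.neg_one_pow]
          push_cast; ring
      _ = (-1:ℚ)^i * (i:ℚ) * ((1 - (-1)^q)/2)
            + ((-1:ℚ)^i * (A:ℚ)) * (((-1)^q * (1 - 2*q) - 1)/4) := by
          rw [Finset.sum_add_distrib, ← Finset.mul_sum, ← Finset.mul_sum,
            sum_neg_one_pow, sum_neg_one_pow_mul]
      _ = -(1/2) * ((-1:ℚ)^(m i) * (m i : ℚ)) + ((A:ℚ)/4) * (-1:ℚ)^(m i)
            + ((1/2) * ((-1:ℚ)^i * i) - ((A:ℚ)/4) * (-1:ℚ)^i) := by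
          have hmq : ((m i : ℕ) : ℚ) = (i:ℚ) + (A:ℚ) * (q:ℚ) := by
            rw [hmiq]; push_cast; ring
          rw [hpm, hmq]; ring
  rw [Finset.sum_congr rfl key]
  obtain ⟨b, hb⟩ := hodd
  have hb' : A = 2*b + 1 := by omega
  rw [Finset.sum_add_distrib, Finset.sum_add_distrib, Finset.sum_sub_distrib,
    ← Finset.mul_sum, ← Finset.mul_sum, ← Finset.mul_sum, ← Finset.mul_sum]
  rw [hb', sum_alt_Ico b, sum_alt_Ico_mul b]
  have : ((2*b+1 : ℕ) : ℚ) = 2*(b:ℚ)+1 := by push_cast; ring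
  rw [this]
  ring
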